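/- arXiv:2508.14265 — 4 statements merged into one kernel-verified Lean document; each statement's English description precedes it below -/
import Mathlib

section
/- Let m ≥ 2 and let φ : F₂^(m+1) → F₂^(m-1) and h : F₂^(m+1) → F₂. Define f : F₂^(m-1) × F₂^(m+1) → F₂ by f(x,y) = x·φ(y) + h(y). Then f is bent (i.e., its Walsh transform takes only values ±2^m) if and only if (1) for every a ∈ F₂^(m-1), the preimage φ⁻¹(a) is a 2-dimensional affine subspace of F₂^(m+1) (so these preimages form a partition of F₂^(m+1) into 2-dimensional flats), and (2) for every a ∈ F₂^(m-1), the restriction of h to φ⁻¹(a) has odd Hamming weight. -/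
open Finset

/-- Dot product on `F₂^k`. -/
def dotp {k : ℕ} (x y : Fin k → ZMod 2) : ZMod 2 := ∑ i, x i * y i

/-- The character `z ↦ (-1)^z`. -/
def chr (z : ZMod 2) : ℤ := (-1 : ℤ) ^ z.val

/-- Walsh–Hadamard transform of a Boolean function on `F₂^p × F₂^q`. -/
def walshP {p q : ℕ} (f : (Fin p → ZMod 2) × (Fin q → ZMod 2) → ZMod 2)
    (a : Fin p → ZMod 2) (b : Fin q → ZMod 2) : ℤ :=
  ∑ x : Fin p → ZMod 2, ∑ y : Fin q → ZMod 2, chr (f (x, y) + dotp a x + dotp b y)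

/-- `S` is a 2-dimensional affine subspace (flat) of `F₂^k`. -/
def Is2Flat {k : ℕ} (S : Set (Fin k → ZMod 2)) : Prop :=
  ∃ (c : Fin k → ZMod 2) (W : Submodule (ZMod 2) (Fin k → ZMod 2)),
    Module.finrank (ZMod 2) ↥W = 2 ∧ S = (fun w => c + w) '' (W : Set (Fin k → ZMod 2))

/- ### Auxiliary lemmas -/

lemma zmod2_cases : ∀ z : ZMod 2, z = 0 ∨ z = 1 := by decide
lemma chr_add : ∀ a b : ZMod 2, chr (a + b) = chr a * chr b := by decide
lemma chr_eq : ∀ z : ZMod 2, chr z = 1 - 2 * (z.val : ℤ) := by decide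
lemma chr_add_one : ∀ z : ZMod 2, chr (z + 1) = - chr z := by decide
lemma val_cast : ∀ z : ZMod 2, ((z.val : ℕ) : ZMod 2) = z := by decide

lemma pi_self {k : ℕ} (z : Fin k → ZMod 2) : z + z = 0 :=
  funext fun _ => CharTwo.add_self_eq_zero _

lemma pi_add_eq_zero {k : ℕ} (u v : Fin k → ZMod 2) : u + v = 0 ↔ u = v := by
  constructor
  · intro hh
    have h2 := congrArg (fun z => u + z) hh
    simp only [← add_assoc, pi_self, zero_add, add_zero] at h2
    exact h2.symm
  · rintro rfl; exact pi_self _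

lemma dotp_add_left {k : ℕ} (x u v : Fin k → ZMod 2) :
    dotp (u + v) x = dotp u x + dotp v x := by
  simp [dotp, add_mul, Finset.sum_add_distrib]

lemma dotp_add_right {k : ℕ} (x u v : Fin k → ZMod 2) :
    dotp x (u + v) = dotp x u + dotp x v := by
  simp [dotp, mul_add, Finset.sum_add_distrib]

lemma dotp_comm {k : ℕ} (x y : Fin k → ZMod 2) : dotp x y = dotp y x := by
  simp [dotp, mul_comm]

lemma dotp_single {k : ℕ} (i0 : Fin k) (v : Fin k → ZMod 2) :
    dotp (Pi.single i0 1) v = v i0 := by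
  rw [dotp, Finset.sum_eq_single i0]
  · simp
  · intro i _ hi; simp [Pi.single_apply, hi]
  · simp

lemma dotp_sum {k : ℕ} (b : Fin k → ZMod 2) (s : Finset (Fin k → ZMod 2)) :
    dotp b (∑ y ∈ s, y) = ∑ y ∈ s, dotp b y := by
  simp only [dotp, Finset.sum_apply, Finset.mul_sum]
  exact Finset.sum_comm

lemma sum_chr_dotp {k : ℕ} (v : Fin k → ZMod 2) :
    ∑ x : Fin k → ZMod 2, chr (dotp x v) = if v = 0 then 2 ^ k else 0 := by
  split
  · next hv =>
    subst hv
    have : ∀ x : Fin k → ZMod 2, dotp x 0 = 0 := by intro x; simp [dotp]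
    simp only [this]
    simp [chr, Fintype.card_fun]
  · next hv =>
    obtain ⟨i0, hi0⟩ := Function.ne_iff.mp hv
    have hz : ∀ z : ZMod 2, z ≠ 0 → z = 1 := by decide
    have hv1 : v i0 = 1 := hz _ (by simpa using hi0)
    set e : Fin k → ZMod 2 := Pi.single i0 1 with he
    have key : ∀ x, chr (dotp (x + e) v) = - chr (dotp x v) := by
      intro x
      rw [dotp_add_left, he, dotp_single, hv1, chr_add_one]
    have hsum : ∑ x : Fin k → ZMod 2, chr (dotp x v)
        = ∑ x : Fin k → ZMod 2, chr (dotp (x + e) v) :=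
      (Fintype.sum_equiv (Equiv.addRight e) _ _ (fun x => rfl)).symm
    rw [Finset.sum_congr rfl (fun x _ => key x)] at hsum
    rw [Finset.sum_neg_distrib] at hsum
    linarith

lemma parseval {k : ℕ} (s : Finset (Fin k → ZMod 2)) (h : (Fin k → ZMod 2) → ZMod 2) :
    ∑ b : Fin k → ZMod 2, (∑ y ∈ s, chr (h y + dotp b y)) ^ 2 = 2 ^ k * s.card := by
  have expand : ∀ b, (∑ y ∈ s, chr (h y + dotp b y)) ^ 2
      = ∑ y ∈ s, ∑ y' ∈ s, chr (h y + h y') * chr (dotp b (y + y')) := by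
    intro b
    rw [sq, Finset.sum_mul_sum]
    refine Finset.sum_congr rfl fun y _ => Finset.sum_congr rfl fun y' _ => ?_
    rw [← chr_add, ← chr_add, dotp_add_right]
    congr 1
    ring
  calc ∑ b : Fin k → ZMod 2, (∑ y ∈ s, chr (h y + dotp b y)) ^ 2
      = ∑ y ∈ s, ∑ y' ∈ s, ∑ b : Fin k → ZMod 2, chr (h y + h y') * chr (dotp b (y + y')) := by
        rw [Finset.sum_congr rfl fun b _ => expand b, Finset.sum_comm]
        exact Finset.sum_congr rfl fun y _ => Finset.sum_comm
    _ = ∑ y ∈ s, ∑ y' ∈ s, (if y' = y then (2:ℤ) ^ k * chr (h y + h y') else 0) := by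
        refine Finset.sum_congr rfl fun y _ => Finset.sum_congr rfl fun y' _ => ?_
        rw [← Finset.mul_sum, sum_chr_dotp]
        have : y + y' = 0 ↔ y' = y := by rw [pi_add_eq_zero, eq_comm]
        rw [if_congr this rfl rfl]
        split <;> ring
    _ = ∑ y ∈ s, (2:ℤ) ^ k * chr (h y + h y) := by
        refine Finset.sum_congr rfl fun y hy => ?_
        rw [Finset.sum_ite_eq' s y (fun y' => (2:ℤ)^k * chr (h y + h y')), if_pos hy]
    _ = 2 ^ k * s.card := by
        have : ∀ y, chr (h y + h y) = 1 := by
          intro y; rw [CharTwo.add_self_eq_zero]; rfl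
        simp [this, mul_comm]

/- ### Flat characterization -/

lemma flat_to_card_sum {k : ℕ} (s : Finset (Fin k → ZMod 2))
    (hs : Is2Flat (↑s : Set (Fin k → ZMod 2))) :
    s.card = 4 ∧ ∑ y ∈ s, y = 0 := by
  obtain ⟨c, W, hrank, hS⟩ := hs
  letI : Fintype ↥W := Fintype.ofFinite _
  letI : Fintype ↥(W : Set (Fin k → ZMod 2)) := Fintype.ofFinite _
  have hcardW : Fintype.card ↥W = 4 := by
    rw [Module.card_eq_pow_finrank (K := ZMod 2) (V := ↥W), hrank]
    rfl
  have hinj : Function.Injective (fun w : Fin k → ZMod 2 => c + w) :=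
    fun _ _ hh => by simpa using hh
  have hfin : s = ((W : Set (Fin k → ZMod 2)).toFinset).image (fun w => c + w) := by
    apply Finset.coe_injective
    rw [Finset.coe_image, Set.coe_toFinset, ← hS]
  have hcardt : ((W : Set (Fin k → ZMod 2)).toFinset).card = 4 := by
    rw [Set.toFinset_card]; simpa using hcardW
  constructor
  · rw [hfin, Finset.card_image_of_injective _ hinj, hcardt]
  · rw [hfin, Finset.sum_image (fun x _ y _ hh => hinj hh)]
    rw [Finset.sum_add_distrib, Finset.sum_const, hcardt]
    have h4c : (4 : ℕ) • c = 0 := by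
      have : (4 : ℕ) = 2 * 2 := rfl
      rw [this, mul_smul]
      have h2 : (2 : ℕ) • c = 0 := by rw [two_smul]; exact pi_self c
      rw [h2, smul_zero]
    rw [h4c, zero_add]
    have : Module.Finite (ZMod 2) ↥W := Module.Finite.of_finite
    let bW : Module.Basis (Fin 2) (ZMod 2) ↥W := Module.finBasisOfFinrankEq (ZMod 2) ↥W hrank
    have hsum : ∑ w ∈ (W : Set (Fin k → ZMod 2)).toFinset, w
        = ∑ w : ↥W, (w : Fin k → ZMod 2) := by
      rw [← Finset.sum_set_coe]
      exact Fintype.sum_equiv (Equiv.subtypeEquivRight (fun x => Iff.rfl)) _ _ (fun w => rfl)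
    rw [hsum]
    have := Fintype.sum_equiv bW.equivFun.toEquiv
      (fun w : ↥W => (w : Fin k → ZMod 2))
      (fun v : Fin 2 → ZMod 2 => ((bW.equivFun.symm v : ↥W) : Fin k → ZMod 2))
      (fun w => by
        rw [LinearEquiv.coe_toEquiv]
        exact congrArg _ (bW.equivFun.symm_apply_apply w).symm)
    rw [this]
    have hrepr : ∀ v : Fin 2 → ZMod 2,
        ((bW.equivFun.symm v : ↥W) : Fin k → ZMod 2)
          = ∑ i : Fin 2, v i • ((bW i : ↥W) : Fin k → ZMod 2) := by
      intro v
      rw [Module.Basis.equivFun_symm_apply]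
      push_cast
      simp
    simp only [hrepr]
    rw [Finset.sum_comm]
    refine Finset.sum_eq_zero fun i _ => ?_
    rw [← Finset.sum_smul]
    have hz : ∀ i : Fin 2, ∑ v : Fin 2 → ZMod 2, v i = 0 := by decide
    rw [hz i, zero_smul]

lemma card_sum_to_flat {k : ℕ} (s : Finset (Fin k → ZMod 2))
    (hcard : s.card = 4) (hsum : ∑ y ∈ s, y = 0) :
    Is2Flat (↑s : Set (Fin k → ZMod 2)) := by
  obtain ⟨p, hp⟩ := Finset.card_pos.mp (by omega : 0 < s.card)
  have herase : (s.erase p).card = 3 := by rw [Finset.card_erase_of_mem hp, hcard]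
  obtain ⟨q, r, t, hqr, hqt, hrt, hE⟩ := Finset.card_eq_three.mp herase
  have hpq : p ≠ q := fun hh => (Finset.ne_of_mem_erase (hE ▸ by simp : q ∈ s.erase p)) hh.symm
  have hpr : p ≠ r := fun hh => (Finset.ne_of_mem_erase (hE ▸ by simp : r ∈ s.erase p)) hh.symm
  have hpt : p ≠ t := fun hh => (Finset.ne_of_mem_erase (hE ▸ by simp : t ∈ s.erase p)) hh.symm
  have hsins : s = insert p {q, r, t} := by
    rw [show ({q, r, t} : Finset _) = s.erase p from hE.symm, Finset.insert_erase hp]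
  have hsum4 : p + (q + (r + t)) = 0 := by
    rw [hsins] at hsum
    rw [Finset.sum_insert (by simp [hpq, hpr, hpt]), Finset.sum_insert (by simp [hqr, hqt]),
      Finset.sum_insert (by simp [hrt]), Finset.sum_singleton] at hsum
    simpa [add_assoc] using hsum
  have ht : t = p + q + r := by
    have := congrArg (fun z => p + q + r + z) hsum4
    simp only [add_zero] at this
    rw [show p + q + r + (p + (q + (r + t))) = (p+p) + ((q+q) + ((r+r) + t)) by ring] at this
    simpa [pi_self] using this
  set u := p + q with hu
  set v := p + r with hv
  have hu0 : u ≠ 0 := fun hh => hpq (by rwa [pi_add_eq_zero] at hh)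
  have hv0 : v ≠ 0 := fun hh => hpr (by rwa [pi_add_eq_zero] at hh)
  have huv : u ≠ v := fun hh => hqr (by
    have h2 := congrArg (fun z => p + z) hh
    simpa [hu, hv, ← add_assoc, pi_self] using h2)
  have hli : LinearIndependent (ZMod 2) ![u, v] := by
    rw [LinearIndependent.pair_iff]
    intro a b hab
    rcases zmod2_cases a with ha | ha <;> rcases zmod2_cases b with hb | hb <;>
      subst ha <;> subst hb
    · exact ⟨rfl, rfl⟩
    · simp only [zero_smul, one_smul, zero_add] at hab; exact absurd hab hv0
    · simp only [zero_smul, one_smul, add_zero] at hab; exact absurd hab hu0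
    · simp only [one_smul] at hab; exact absurd ((pi_add_eq_zero u v).mp hab) huv
  refine ⟨p, Submodule.span (ZMod 2) {u, v}, ?_, ?_⟩
  · have hr : Set.range ![u, v] = {u, v} := by
      simp [Matrix.range_cons, Matrix.range_empty, Set.pair_comm]
    rw [← hr, finrank_span_eq_card hli]
    simp
  · ext z
    simp only [Finset.coe_insert, hsins, Finset.coe_singleton, Set.mem_insert_iff,
      Set.mem_singleton_iff, Set.mem_image, SetLike.mem_coe, Submodule.mem_span_pair]
    constructor
    · intro hz
      rcases hz with hz | hz | hz | hz <;> rw [hz]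
      · exact ⟨0, ⟨0, 0, by simp⟩, by simp⟩
      · exact ⟨u, ⟨1, 0, by simp⟩, by
          rw [hu]; rw [show p + (p + q) = (p + p) + q by ring]; simp [pi_self]⟩
      · exact ⟨v, ⟨0, 1, by simp⟩, by
          rw [hv]; rw [show p + (p + r) = (p + p) + r by ring]; simp [pi_self]⟩
      · exact ⟨u + v, ⟨1, 1, by simp⟩, by
          rw [ht, hu, hv]
          rw [show p + (p + q + (p + r)) = (p + p) + (p + q + r) by ring]
          simp [pi_self]⟩
    · rintro ⟨w, ⟨a, b, rfl⟩, rfl⟩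
      rcases zmod2_cases a with ha | ha <;> rcases zmod2_cases b with hb | hb <;>
        subst ha <;> subst hb
      · left; simp
      · right; right; left
        rw [hv]
        rw [show p + ((0:ZMod 2) • u + (1:ZMod 2) • (p + r)) = (p+p) + r + (0:ZMod 2)•u by module]
        simp [pi_self]
      · right; left
        rw [hu]
        rw [show p + ((1:ZMod 2) • (p + q) + (0:ZMod 2) • v) = (p+p) + q + (0:ZMod 2)•v by module]
        simp [pi_self]
      · right; right; right
        rw [ht, hu, hv]
        rw [show p + ((1:ZMod 2) • (p + q) + (1:ZMod 2) • (p + r)) = (p+p) + (p + q + r) by module]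
        simp [pi_self]

/- ### Counting lemmas -/

lemma odd_iff_cast (N : ℕ) : (N : ZMod 2) = 1 ↔ Odd N := by
  rw [Nat.odd_iff, ← ZMod.natCast_mod N 2]
  have : N % 2 = 0 ∨ N % 2 = 1 := by omega
  rcases this with hh | hh <;> rw [hh] <;> simp

lemma sum_g_eq_cast {k : ℕ} (s : Finset (Fin k → ZMod 2)) (g : (Fin k → ZMod 2) → ZMod 2) :
    ((∑ y ∈ s, (g y).val : ℕ) : ZMod 2) = ∑ y ∈ s, g y := by
  rw [Nat.cast_sum]
  exact Finset.sum_congr rfl fun y _ => val_cast _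

lemma chr_sum_eq {k : ℕ} (s : Finset (Fin k → ZMod 2)) (g : (Fin k → ZMod 2) → ZMod 2) :
    ∑ y ∈ s, chr (g y) = (s.card : ℤ) - 2 * ((∑ y ∈ s, (g y).val : ℕ) : ℤ) := by
  rw [Finset.sum_congr rfl fun y _ => chr_eq (g y), Finset.sum_sub_distrib]
  push_cast
  rw [Finset.sum_const, Finset.mul_sum]
  simp [nsmul_eq_mul]

lemma key_pointwise {k : ℕ} (s : Finset (Fin k → ZMod 2)) (g : (Fin k → ZMod 2) → ZMod 2)
    (hcard : s.card = 4) :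
    ((∑ y ∈ s, chr (g y)) = 2 ∨ (∑ y ∈ s, chr (g y)) = -2) ↔ (∑ y ∈ s, g y) = 1 := by
  obtain ⟨N, hNdef⟩ : ∃ N : ℕ, ∑ y ∈ s, (g y).val = N := ⟨_, rfl⟩
  have hT : ∑ y ∈ s, chr (g y) = (4 : ℤ) - 2 * (N : ℤ) := by
    rw [chr_sum_eq, hcard, hNdef]; norm_num
  have hNle : N ≤ 4 := by
    rw [← hNdef]
    calc ∑ y ∈ s, (g y).val ≤ ∑ y ∈ s, 1 := Finset.sum_le_sum fun y _ => by
              have := ZMod.val_lt (g y); omega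
    _ = 4 := by rw [Finset.sum_const, hcard]; simp
  rw [hT, ← sum_g_eq_cast, hNdef, odd_iff_cast, Nat.odd_iff]
  omega

lemma piece3 {k : ℕ} (s : Finset (Fin k → ZMod 2)) (h : (Fin k → ZMod 2) → ZMod 2) :
    (∀ b, (∑ y ∈ s, (h y + dotp b y)) = 1) ↔
      ((∑ y ∈ s, y) = 0 ∧ (∑ y ∈ s, h y) = 1) := by
  have hsplit : ∀ b, (∑ y ∈ s, (h y + dotp b y)) = (∑ y ∈ s, h y) + dotp b (∑ y ∈ s, y) := by
    intro b
    rw [Finset.sum_add_distrib, dotp_sum]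
  constructor
  · intro hb
    have h0 : (∑ y ∈ s, h y) = 1 := by
      have := hb 0
      rw [hsplit 0] at this
      simpa [dotp] using this
    refine ⟨?_, h0⟩
    funext i
    have hthis := hb (Pi.single i 1)
    rw [hsplit, dotp_single, h0] at hthis
    have h3 : (∑ y ∈ s, y) i = 0 := add_left_cancel (hthis.trans (add_zero (1 : ZMod 2)).symm)
    simpa using h3
  · rintro ⟨hz, h1⟩
    intro b
    rw [hsplit, hz, h1]
    simp [dotp]

lemma sum_eq_card_filter {k : ℕ} (s : Finset (Fin k → ZMod 2))
    (g : (Fin k → ZMod 2) → ZMod 2) :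
    (∑ y ∈ s, g y) = (((s.filter fun y => g y = 1).card : ℕ) : ZMod 2) := by
  rw [← Finset.sum_filter_of_ne (p := fun y => g y = 1)
      (fun y _ hy => (zmod2_cases (g y)).resolve_left hy)]
  rw [Finset.sum_congr rfl fun y hy => (Finset.mem_filter.mp hy).2]
  simp

/- ### Walsh factorization -/

lemma walsh_factor {p q : ℕ} (φ : (Fin q → ZMod 2) → (Fin p → ZMod 2))
    (h : (Fin q → ZMod 2) → ZMod 2)
    (f : (Fin p → ZMod 2) × (Fin q → ZMod 2) → ZMod 2)
    (hf : ∀ x y, f (x, y) = dotp x (φ y) + h y)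
    (a : Fin p → ZMod 2) (b : Fin q → ZMod 2) :
    walshP f a b
      = 2 ^ p * ∑ y ∈ Finset.univ.filter (fun y => φ y = a), chr (h y + dotp b y) := by
  unfold walshP
  rw [Finset.sum_comm]
  have inner : ∀ y : Fin q → ZMod 2,
      ∑ x : Fin p → ZMod 2, chr (f (x, y) + dotp a x + dotp b y)
        = chr (h y + dotp b y) * (if φ y = a then (2:ℤ) ^ p else 0) := by
    intro y
    have harg : ∀ x, f (x, y) + dotp a x + dotp b y
        = (h y + dotp b y) + dotp x (φ y + a) := by
      intro x
      rw [hf, dotp_add_right, dotp_comm x a]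
      ring
    rw [Finset.sum_congr rfl fun x _ => by rw [harg x, chr_add], ← Finset.mul_sum,
      sum_chr_dotp]
    congr 1
    rw [if_congr (pi_add_eq_zero (φ y) a) rfl rfl]
  rw [Finset.sum_congr rfl fun y _ => inner y, Finset.sum_filter, Finset.mul_sum]
  refine Finset.sum_congr rfl fun y _ => ?_
  split <;> ring

/-- full characterization of bentness of
`f(x,y) = x·φ(y) + h(y)` on `F₂^{m-1} × F₂^{m+1}`. -/
theorem bent_iff_flat_partition_and_odd_weight {m : ℕ} (hm : 2 ≤ m)
    (φ : (Fin (m + 1) → ZMod 2) → (Fin (m - 1) → ZMod 2))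
    (h : (Fin (m + 1) → ZMod 2) → ZMod 2)
    (f : (Fin (m - 1) → ZMod 2) × (Fin (m + 1) → ZMod 2) → ZMod 2)
    (hf : ∀ x y, f (x, y) = dotp x (φ y) + h y) :
    (∀ a b, walshP f a b = 2 ^ m ∨ walshP f a b = -(2 ^ m)) ↔
      ((∀ a, Is2Flat {y | φ y = a}) ∧
        (∀ a, Odd ((Finset.univ.filter fun y => φ y = a ∧ h y = 1)).card)) := by
  have key : ∀ a : Fin (m - 1) → ZMod 2,
      (∀ b, walshP f a b = 2 ^ m ∨ walshP f a b = -(2 ^ m)) ↔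
      (Is2Flat {y | φ y = a} ∧
        Odd ((Finset.univ.filter fun y => φ y = a ∧ h y = 1)).card) := by
    intro a
    set s : Finset (Fin (m + 1) → ZMod 2) := Finset.univ.filter (fun y => φ y = a) with hsdef
    have hset : {y | φ y = a} = (↑s : Set (Fin (m + 1) → ZMod 2)) := by
      ext y; simp [hsdef]
    have hfilter : (Finset.univ.filter fun y => φ y = a ∧ h y = 1)
        = s.filter (fun y => h y = 1) := by
      rw [hsdef, Finset.filter_filter]
    have hpow : (2 : ℤ) ^ (m - 1) ≠ 0 := pow_ne_zero _ two_ne_zero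
    have hmsplit : (2 : ℤ) ^ m = 2 ^ (m - 1) * 2 := by
      rw [← pow_succ]
      congr 1
      omega
    -- step 2 : bent at (a, ·) iff T b = ±2
    have step2 : (∀ b, walshP f a b = 2 ^ m ∨ walshP f a b = -(2 ^ m)) ↔
        (∀ b, (∑ y ∈ s, chr (h y + dotp b y)) = 2 ∨
              (∑ y ∈ s, chr (h y + dotp b y)) = -2) := by
      refine forall_congr' fun b => ?_
      rw [walsh_factor φ h f hf a b, ← hsdef, hmsplit]
      constructor
      · rintro (hh | hh)
        · exact Or.inl (mul_left_cancel₀ hpow hh)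
        · refine Or.inr (mul_left_cancel₀ hpow ?_)
          rw [hh]; ring
      · rintro (hh | hh)
        · exact Or.inl (by rw [hh])
        · exact Or.inr (by rw [hh]; ring)
    rw [step2, hset, hfilter]
    constructor
    · intro hT
      -- Parseval gives |s| = 4
      have hcard : s.card = 4 := by
        have hpars := parseval s h
        have hconst : ∑ b : Fin (m + 1) → ZMod 2,
            (∑ y ∈ s, chr (h y + dotp b y)) ^ 2 = (2 ^ (m + 1) : ℤ) * 4 := by
          have heach : ∀ b : Fin (m + 1) → ZMod 2,
              (∑ y ∈ s, chr (h y + dotp b y)) ^ 2 = 4 := by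
            intro b; rcases hT b with hh | hh <;> rw [hh] <;> norm_num
          rw [Finset.sum_congr rfl fun b _ => heach b, Finset.sum_const]
          simp [Fintype.card_fun, mul_comm]
        rw [hconst] at hpars
        have h4 : ((4 : ℕ) : ℤ) = (s.card : ℤ) :=
          mul_left_cancel₀ (pow_ne_zero (m + 1) (two_ne_zero (α := ℤ))) (by
            rw [← hpars]; norm_num)
        exact_mod_cast h4.symm
      have hone : ∀ b, (∑ y ∈ s, (h y + dotp b y)) = 1 := fun b =>
        (key_pointwise s (fun y => h y + dotp b y) hcard).mp (hT b)
      obtain ⟨hz, h1⟩ := (piece3 s h).mp hone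
      refine ⟨card_sum_to_flat s hcard hz, ?_⟩
      rw [sum_eq_card_filter, odd_iff_cast] at h1
      exact h1
    · rintro ⟨hflat, hodd⟩
      obtain ⟨hcard, hz⟩ := flat_to_card_sum s hflat
      have h1 : (∑ y ∈ s, h y) = 1 := by
        rw [sum_eq_card_filter, odd_iff_cast]
        exact hodd
      have hone := (piece3 s h).mpr ⟨hz, h1⟩
      exact fun b => (key_pointwise s (fun y => h y + dotp b y) hcard).mpr (hone b)
  constructor
  · intro hw
    exact ⟨fun a => ((key a).mp (hw a)).1, fun a => ((key a).mp (hw a)).2⟩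
  · rintro ⟨h1, h2⟩ a
    exact (key a).mpr ⟨h1 a, h2 a⟩
end

section
/- Let y₁, y₂, y₃, y₄ ∈ F₂^(m+1) be distinct with y₁ + y₂ + y₃ + y₄ = 0, and let h₁, ..., h₄ be Boolean functions each of odd weight on {y₁,...,y₄}. Then Σ_{i=1}^4 Σ_{j=1}^4 hᵢ(yⱼ)·yⱼ = 0 in F₂^(m+1) if and only if either Σ_{i=1}^4 hᵢ(yⱼ) = 0 for all j = 1,...,4, or Σ_{i=1}^4 hᵢ(yⱼ) = 1 for all j = 1,...,4. -/
open Finset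

lemma key_aux {m : ℕ} (v : Fin 4 → (Fin (m + 1) → ZMod 2))
    (hsumv : v 0 + v 1 + v 2 + v 3 = 0)
    (hne : ∀ i j : Fin 4, i ≠ j → v i + v j ≠ 0)
    (g : Fin 4 → ZMod 2) (hg : g 0 + g 1 + g 2 + g 3 = 0) :
    (g 0 • v 0 + g 1 • v 1 + g 2 • v 2 + g 3 • v 3 = 0) ↔
      ((g 0 = 0 ∧ g 1 = 0 ∧ g 2 = 0 ∧ g 3 = 0) ∨
       (g 0 = 1 ∧ g 1 = 1 ∧ g 2 = 1 ∧ g 3 = 1)) := by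
  have z01 : ∀ z : ZMod 2, z = 0 ∨ z = 1 := by decide
  have hone : (1 : ZMod 2) ≠ 0 := by decide
  rcases z01 (g 0) with h0 | h0 <;> rcases z01 (g 1) with h1 | h1 <;>
    rcases z01 (g 2) with h2 | h2 <;> rcases z01 (g 3) with h3 | h3 <;>
    rw [h0, h1, h2, h3] at hg ⊢ <;>
    simp only [zero_smul, one_smul, add_zero, zero_add] <;>
    first
      | (exfalso; revert hg; decide)
      | (simp only [hone, one_ne_zero, zero_ne_one, and_false, false_and,
            or_self, iff_false] <;>
          first
           | exact hne 0 1 (by decide)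
           | exact hne 0 2 (by decide)
           | exact hne 0 3 (by decide)
           | exact hne 1 2 (by decide)
           | exact hne 1 3 (by decide)
           | exact hne 2 3 (by decide))
      | (simp [hone, hsumv])

/-- under the same hypotheses, `Σᵢ Σⱼ hᵢ(yⱼ)·yⱼ = 0` iff the sums
`Σᵢ hᵢ(yⱼ)` are all `0` or all `1`. -/
theorem sum_smul_eq_zero_iff {m : ℕ}
    (y : Fin 4 → (Fin (m + 1) → ZMod 2)) (hy : Function.Injective y)
    (hsum : ∑ j, y j = 0)
    (h : Fin 4 → ((Fin (m + 1) → ZMod 2) → ZMod 2))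
    (hodd : ∀ i, ∑ j, h i (y j) = 1) :
    (∑ i : Fin 4, ∑ j : Fin 4, h i (y j) • y j = 0) ↔
      ((∀ j, ∑ i, h i (y j) = 0) ∨ (∀ j, ∑ i, h i (y j) = 1)) := by
  have hforall : ∀ (P : Fin 4 → Prop), (∀ j, P j) ↔ P 0 ∧ P 1 ∧ P 2 ∧ P 3 := by
    intro P
    exact ⟨fun hp => ⟨hp 0, hp 1, hp 2, hp 3⟩,
      fun ⟨a, b, c, d⟩ j => by fin_cases j <;> assumption⟩
  have hswap : (∑ i : Fin 4, ∑ j : Fin 4, h i (y j) • y j)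
      = ∑ j : Fin 4, (∑ i : Fin 4, h i (y j)) • y j := by
    rw [Finset.sum_comm]
    exact Finset.sum_congr rfl fun j _ => (Finset.sum_smul).symm
  have hgsum : (∑ i : Fin 4, h i (y 0)) + (∑ i : Fin 4, h i (y 1))
      + (∑ i : Fin 4, h i (y 2)) + (∑ i : Fin 4, h i (y 3)) = 0 := by
    have h4 : ∑ j : Fin 4, ∑ i : Fin 4, h i (y j) = 0 := by
      rw [Finset.sum_comm]
      simp only [hodd]
      decide
    simpa [Fin.sum_univ_four] using h4
  have hne : ∀ i j : Fin 4, i ≠ j → y i + y j ≠ 0 := by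
    intro i j hij hc
    have h1 : y i = -(y j) := eq_neg_of_add_eq_zero_left hc
    rw [CharTwo.neg_eq] at h1
    exact hij (hy h1)
  have hsumv : y 0 + y 1 + y 2 + y 3 = 0 := by
    simpa [Fin.sum_univ_four] using hsum
  rw [hswap, Fin.sum_univ_four,
    hforall (fun j => ∑ i : Fin 4, h i (y j) = 0),
    hforall (fun j => ∑ i : Fin 4, h i (y j) = 1)]
  exact key_aux y hsumv hne (fun j => ∑ i : Fin 4, h i (y j)) hgsum
end

section
/- Let Φ : F₂^(n/2+k) → F₂^(n/2+k) be a permutation whose coordinate functions Φ_{j₁}, ..., Φ_{j_{n/2-k}} (for some index subset of size n/2-k) satisfy ∩_{i=1}^{n/2-k} L^{(D_a Φ_{jᵢ})} = {0, a} for every nonzero a. Then the mapping φ : F₂^(n/2+k) → F₂^(n/2-k) obtained by keeping only those n/2-k coordinates satisfies (P₁*): D_a D_b φ ≠ 0 for all linearly independent a, b. -/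
open Finset

/-- Property `(P₁*)`. -/
def P1star {p q : ℕ} (φ : (Fin p → ZMod 2) → (Fin q → ZMod 2)) : Prop :=
  ∀ v w : Fin p → ZMod 2, LinearIndependent (ZMod 2) ![v, w] →
    ∃ y, φ y + φ (y + v) + φ (y + w) + φ (y + v + w) ≠ 0

/-- removing coordinates of a permutation `Φ` of `F₂^{n/2+k}` whose kept
coordinates `Φ_{j₁},…,Φ_{j_{n/2-k}}` satisfy `∩ᵢ L^{(D_a Φ_{jᵢ})} = {0,a}` for every
nonzero `a`, yields a mapping `φ : F₂^{n/2+k} → F₂^{n/2-k}` satisfying `(P₁*)`. -/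
theorem P1star_of_removing_coordinates {n k : ℕ}
    (Φ : (Fin (n / 2 + k) → ZMod 2) → (Fin (n / 2 + k) → ZMod 2))
    (hΦ : Function.Bijective Φ)
    (j : Fin (n / 2 - k) → Fin (n / 2 + k)) (hj : Function.Injective j)
    (hL : ∀ a : Fin (n / 2 + k) → ZMod 2, a ≠ 0 →
      {v : Fin (n / 2 + k) → ZMod 2 |
          ∀ i : Fin (n / 2 - k), ∃ c : ZMod 2,
            ∀ x, Φ x (j i) + Φ (x + v) (j i) + Φ (x + a) (j i) + Φ (x + v + a) (j i) = c} =
        ({0, a} : Set (Fin (n / 2 + k) → ZMod 2))) :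
    P1star (fun y i => Φ y (j i)) := by
  intro v w hli
  by_contra h
  push_neg at h
  have hv : v ≠ 0 := hli.ne_zero 0
  have hw0 : w ≠ 0 := hli.ne_zero 1
  have hwv : w ≠ v := by
    intro e
    have : (1 : Fin 2) = 0 := hli.injective (by simp [e])
    exact absurd this (by decide)
  have hmem : w ∈ {u : Fin (n / 2 + k) → ZMod 2 |
      ∀ i : Fin (n / 2 - k), ∃ c : ZMod 2,
        ∀ x, Φ x (j i) + Φ (x + u) (j i) + Φ (x + v) (j i) + Φ (x + u + v) (j i) = c} := by
    intro i
    refine ⟨0, fun x => ?_⟩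
    have := congrFun (h x) i
    simp only [Pi.add_apply, Pi.zero_apply] at this
    calc Φ x (j i) + Φ (x + w) (j i) + Φ (x + v) (j i) + Φ (x + w + v) (j i)
        = Φ x (j i) + Φ (x + v) (j i) + Φ (x + w) (j i) + Φ (x + v + w) (j i) := by
          rw [add_right_comm x w v]; ring
      _ = 0 := this
  rw [hL v hv] at hmem
  rcases hmem with h0 | h1
  · exact hw0 h0
  · exact hwv h1
end

section
/- Let f : F₂^(2m) → F₂ be a bent function in GMM_{m+1}, i.e., f(x',y') = x'·φ(y') + h(y') with x' ∈ F₂^(m-1), y' ∈ F₂^(m+1), satisfying the bentness conditions. Then f belongs to the strict Maiorana–McFarland class M (i.e., f(x,y) = x·π(y) + g(y) for a permutation π of F₂^m after identifying F₂^(2m) = F₂^m × F₂^m in the canonical way) if and only if f can be written with φ and h satisfying: (1) φ(x_m, y) does not depend on its first coordinate x_m (writing y' = (x_m, y) with y ∈ F₂^m); and (2) the Boolean function h'(y) := h(0,y) + h(1,y) on F₂^m is balanced and the map y ↦ (φ₁(y), ..., φ_{m-1}(y), h'(y)) is a permutation of F₂^m. -/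
open Finset

lemma dotp_ext {k : ℕ} {a b : Fin k → ZMod 2} {c d : ZMod 2}
    (H : ∀ x, dotp x a + c = dotp x b + d) : a = b ∧ d = c := by
  have h0 := H 0
  simp [dotp] at h0
  constructor
  · funext i
    have hi := H (Pi.single i 1)
    simp [dotp, Pi.single_apply, ite_mul] at hi
    rw [h0] at hi
    exact (add_right_cancel hi)
  · exact h0.symm

lemma dotp_snoc {k : ℕ} (x : Fin k → ZMod 2) (xm : ZMod 2) (v : Fin (k+1) → ZMod 2) :
    dotp (Fin.snoc x xm) v = dotp x (fun i => v i.castSucc) + xm * v (Fin.last k) := by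
  simp [dotp, Fin.sum_univ_castSucc]

lemma snoc_front_last {k : ℕ} (v : Fin (k+1) → ZMod 2) :
    (Fin.snoc (fun i => v i.castSucc) (v (Fin.last k)) : Fin (k+1) → ZMod 2) = v := by
  funext i
  induction i using Fin.lastCases with
  | last => simp
  | cast j => simp

lemma card_last_one (m : ℕ) :
    (Finset.univ.filter fun v : Fin (m+1) → ZMod 2 => v (Fin.last m) = 1).card = 2^m := by
  rw [show (2:ℕ)^m = (Finset.univ : Finset (Fin m → ZMod 2)).card by simp [ZMod.card]]
  apply Finset.card_bij' (fun v _ => fun i : Fin m => v i.castSucc)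
    (fun w _ => (Fin.snoc w 1 : Fin (m+1) → ZMod 2))
  · intro v _; simp
  · intro v hv
    simp at hv
    simp [hv]
  · intro v hv
    simp at hv
    funext i
    induction i using Fin.lastCases with
    | last => simp [hv]
    | cast j => simp
  · intro w _
    funext j
    simp

lemma card_filter_comp {m : ℕ} (π : (Fin (m+1) → ZMod 2) → (Fin (m+1) → ZMod 2))
    (hπ : Function.Bijective π) (p : (Fin (m+1) → ZMod 2) → Prop) [DecidablePred p] :
    (Finset.univ.filter fun y => p (π y)).card = (Finset.univ.filter p).card := by
  apply Finset.card_bij (fun y _ => π y)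
  · intro y hy; simp at hy ⊢; exact hy
  · intro a _ b _ h; exact hπ.1 h
  · intro b hb
    obtain ⟨a, rfl⟩ := hπ.2 b
    simp at hb
    exact ⟨a, by simpa using hb, rfl⟩


/-- a bent `f ∈ GMM_{m+1}` on `F₂^m × F₂^{m+2}` (here the paper's `m-1`
is `m` and `m+1` is `m+1`) is in the strict Maiorana–McFarland class — i.e., after the
canonical identification `F₂^{2(m+1)} = F₂^{m+1} × F₂^{m+1}` (the full first block is
`(x, x_m)` and `y' = (x_m, y)`) it equals `(x,y) ↦ x·π(y) + g(y)` for a permutation `π`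
— iff `f` can be written as `x'·φ(y') + h(y')` with `φ, h` satisfying the bentness
conditions together with: (1) `φ` does not depend on the first coordinate of `y'`;
(2) `h'(y) = h(0,y) + h(1,y)` is balanced and extends `φ` to a permutation of `F₂^{m+1}`. -/
theorem GMM_in_strict_MM_iff {m : ℕ}
    (f : (Fin m → ZMod 2) × (Fin (m + 2) → ZMod 2) → ZMod 2)
    (φ₀ : (Fin (m + 2) → ZMod 2) → (Fin m → ZMod 2))
    (h₀ : (Fin (m + 2) → ZMod 2) → ZMod 2)
    (hf : ∀ x y, f (x, y) = dotp x (φ₀ y) + h₀ y)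
    (hflat : ∀ a, Is2Flat {y | φ₀ y = a})
    (hodd : ∀ a, Odd ((Finset.univ.filter fun y => φ₀ y = a ∧ h₀ y = 1)).card) :
    (∃ π : (Fin (m + 1) → ZMod 2) → (Fin (m + 1) → ZMod 2), Function.Bijective π ∧
        ∃ g : (Fin (m + 1) → ZMod 2) → ZMod 2,
          ∀ (x : Fin m → ZMod 2) (xm : ZMod 2) (y : Fin (m + 1) → ZMod 2),
            f (x, Fin.cons xm y) = dotp (Fin.snoc x xm) (π y) + g y) ↔
      (∃ (φ : (Fin (m + 2) → ZMod 2) → (Fin m → ZMod 2))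
          (h : (Fin (m + 2) → ZMod 2) → ZMod 2),
        (∀ x y, f (x, y) = dotp x (φ y) + h y) ∧
        (∀ a, Is2Flat {y | φ y = a}) ∧
        (∀ a, Odd ((Finset.univ.filter fun y => φ y = a ∧ h y = 1)).card) ∧
        (∀ (c c' : ZMod 2) (y : Fin (m + 1) → ZMod 2),
          φ (Fin.cons c y) = φ (Fin.cons c' y)) ∧
        ((Finset.univ.filter fun y : Fin (m + 1) → ZMod 2 =>
            h (Fin.cons 0 y) + h (Fin.cons 1 y) = 1).card = 2 ^ m) ∧
        Function.Bijective
          (fun y : Fin (m + 1) → ZMod 2 =>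
            (Fin.snoc (φ (Fin.cons 0 y)) (h (Fin.cons 0 y) + h (Fin.cons 1 y)) :
              Fin (m + 1) → ZMod 2))) := by
  constructor
  · rintro ⟨π, hπ, g, hg⟩
    have key : ∀ (xm : ZMod 2) (y : Fin (m+1) → ZMod 2),
        φ₀ (Fin.cons xm y) = (fun i => π y i.castSucc) ∧
        xm * π y (Fin.last m) + g y = h₀ (Fin.cons xm y) := by
      intro xm y
      apply dotp_ext
      intro x
      rw [← hf, hg, dotp_snoc]
      ring
    have hlast : ∀ y, h₀ (Fin.cons 0 y) + h₀ (Fin.cons 1 y) = π y (Fin.last m) := by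
      intro y
      rw [← (key 0 y).2, ← (key 1 y).2]
      have : ∀ t g : ZMod 2, 0 * t + g + (1 * t + g) = t := by decide
      exact this _ _
    refine ⟨φ₀, h₀, hf, hflat, hodd, ?_, ?_, ?_⟩
    · intro c c' y; rw [(key c y).1, (key c' y).1]
    · simp only [hlast]
      exact card_filter_comp π hπ (fun v => v (Fin.last m) = 1) ▸ card_last_one m
    · have heq : (fun y : Fin (m+1) → ZMod 2 =>
          (Fin.snoc (φ₀ (Fin.cons 0 y)) (h₀ (Fin.cons 0 y) + h₀ (Fin.cons 1 y)) :
            Fin (m+1) → ZMod 2)) = π := by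
        funext y
        rw [(key 0 y).1, hlast y]
        exact snoc_front_last (π y)
      rw [heq]; exact hπ
  · rintro ⟨φ, h, hf', hflat', hodd', hindep, hcard, hbij⟩
    refine ⟨_, hbij, fun y => h (Fin.cons 0 y), ?_⟩
    intro x xm y
    rw [hf', dotp_snoc, hindep xm 0 y]
    have h1 : (fun i : Fin m =>
        (Fin.snoc (φ (Fin.cons 0 y)) (h (Fin.cons 0 y) + h (Fin.cons 1 y)) :
          Fin (m+1) → ZMod 2) i.castSucc) = φ (Fin.cons 0 y) := by
      funext i; simp
    have h2 : (Fin.snoc (φ (Fin.cons 0 y)) (h (Fin.cons 0 y) + h (Fin.cons 1 y)) :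
        Fin (m+1) → ZMod 2) (Fin.last m) = h (Fin.cons 0 y) + h (Fin.cons 1 y) := by simp
    rw [h1, h2]
    have hz : ∀ z : ZMod 2, z = 0 ∨ z = 1 := by decide
    rcases hz xm with rfl | rfl
    · ring
    · have : ∀ d a b : ZMod 2, d + b = d + 1 * (a + b) + a := by decide
      exact this _ _ _
end
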